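/- Every semi-open integral rectangle R in ℝ² contains exactly V(R) lattice points, where V is the area: if A, B ∈ ℤ², R is the semi-open rectangle with base [A,B) and height h such that the far side of R lies on a line meeting ℤ², then card(R ∩ ℤ²) = V(R). -/

import Mathlib

open Set MeasureTheory

/-- Rotation by `π/2` in the plane. -/
def rot (v : ℝ × ℝ) : ℝ × ℝ := (-v.2, v.1)

/-- Euclidean norm in the plane. -/
noncomputable def enorm2 (v : ℝ × ℝ) : ℝ := Real.sqrt (v.1 ^ 2 + v.2 ^ 2)

/-- The semi-open rectangle of (oriented) basis `[A,B)` and signed height `h`. -/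
noncomputable def rect (A B : ℝ × ℝ) (h : ℝ) : Set (ℝ × ℝ) :=
  {x | ∃ s t : ℝ, 0 ≤ s ∧ s < 1 ∧ 0 ≤ t ∧ t < 1 ∧
    x = A + s • (B - A) + ((t * h) / enorm2 (B - A)) • rot (B - A)}

/-- The lattice points of the plane. -/
def latt : Set (ℝ × ℝ) := {x | (∃ m : ℤ, x.1 = (m : ℝ)) ∧ ∃ n : ℤ, x.2 = (n : ℝ)}

theorem vol_pgram (A v w : ℝ × ℝ) :
    volume {x : ℝ × ℝ | ∃ s t : ℝ, 0 ≤ s ∧ s < 1 ∧ 0 ≤ t ∧ t < 1 ∧ x = A + s • v + t • w}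
      = ENNReal.ofReal |v.1 * w.2 - w.1 * v.2| := by
  have hset : {x : ℝ × ℝ | ∃ s t : ℝ, 0 ≤ s ∧ s < 1 ∧ 0 ≤ t ∧ t < 1 ∧ x = A + s • v + t • w}
      = (fun y => A + y) ''
        (((LinearMap.fst ℝ ℝ ℝ).smulRight v + (LinearMap.snd ℝ ℝ ℝ).smulRight w) ''
          (Ico (0:ℝ) 1 ×ˢ Ico (0:ℝ) 1)) := by
    ext x
    simp only [mem_setOf_eq, mem_image, mem_prod, mem_Ico, LinearMap.add_apply,
      LinearMap.coe_smulRight, LinearMap.fst_apply, LinearMap.snd_apply]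
    constructor
    · rintro ⟨s, t, h1, h2, h3, h4, rfl⟩
      exact ⟨s • v + t • w, ⟨(s, t), ⟨⟨h1, h2⟩, h3, h4⟩, rfl⟩, (add_assoc _ _ _).symm⟩
    · rintro ⟨y, ⟨⟨s, t⟩, ⟨⟨h1, h2⟩, h3, h4⟩, rfl⟩, rfl⟩
      exact ⟨s, t, h1, h2, h3, h4, (add_assoc _ _ _).symm⟩
  rw [hset]
  rw [show ((fun y => A + y) '' _) = (A + ·) '' _ from rfl]
  rw [Set.image_add_left, measure_preimage_add]
  rw [Measure.addHaar_image_linearMap]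
  have hdet : LinearMap.det ((LinearMap.fst ℝ ℝ ℝ).smulRight v + (LinearMap.snd ℝ ℝ ℝ).smulRight w)
      = v.1 * w.2 - w.1 * v.2 := by
    have : LinearMap.toMatrix (Module.Basis.finTwoProd ℝ) (Module.Basis.finTwoProd ℝ)
        ((LinearMap.fst ℝ ℝ ℝ).smulRight v + (LinearMap.snd ℝ ℝ ℝ).smulRight w)
        = !![v.1, w.1; v.2, w.2] := by
      ext i j
      fin_cases i <;> fin_cases j <;> simp [LinearMap.toMatrix_apply, Module.Basis.finTwoProd]
    rw [← LinearMap.det_toMatrix (Module.Basis.finTwoProd ℝ), this, Matrix.det_fin_two]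
    simp
  rw [hdet]
  have : volume (Ico (0:ℝ) 1 ×ˢ Ico (0:ℝ) 1) = 1 := by
    rw [Measure.volume_eq_prod, Measure.prod_prod]; simp
  rw [this, mul_one]

set_option maxHeartbeats 3200000 in
theorem stmt10 (A B : ℝ × ℝ) (hAB : A ≠ B) (h : ℝ) (hh : h ≠ 0)
    (hAlat : A ∈ latt) (hBlat : B ∈ latt)
    (hfar : ∃ z ∈ latt, ∃ s : ℝ,
      z = A + (h / enorm2 (B - A)) • rot (B - A) + s • (B - A)) :
    ((rect A B h ∩ latt).ncard : ℝ) = (volume (rect A B h)).toReal := by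
  obtain ⟨⟨a1, hA1⟩, ⟨a2, hA2⟩⟩ := hAlat
  obtain ⟨⟨b1, hB1⟩, ⟨b2, hB2⟩⟩ := hBlat
  have hA : A = ((a1 : ℝ), (a2 : ℝ)) := Prod.ext_iff.mpr ⟨hA1, hA2⟩
  have hB : B = ((b1 : ℝ), (b2 : ℝ)) := Prod.ext_iff.mpr ⟨hB1, hB2⟩
  set p : ℤ := b1 - a1 with hp_def
  set q : ℤ := b2 - a2 with hq_def
  have hBA : B - A = ((p : ℝ), (q : ℝ)) := by
    rw [hA, hB, Prod.mk_sub_mk, hp_def, hq_def]; push_cast; rfl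
  have hpq : p ≠ 0 ∨ q ≠ 0 := by
    by_contra hcon
    push_neg at hcon
    apply hAB
    have : B - A = 0 := by rw [hBA, hcon.1, hcon.2]; simp
    have := sub_eq_zero.mp this
    exact this.symm
  set N : ℤ := p ^ 2 + q ^ 2 with hN_def
  have hNpos : 0 < N := by
    rcases hpq with hp | hq
    · have : 0 < p ^ 2 := by positivity
      nlinarith [sq_nonneg q]
    · have : 0 < q ^ 2 := by positivity
      nlinarith [sq_nonneg p]
  have hNR : (0 : ℝ) < (N : ℝ) := by exact_mod_cast hNpos
  have hNne : (N : ℝ) ≠ 0 := ne_of_gt hNR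
  have hNcast : (N : ℝ) = (p : ℝ) ^ 2 + (q : ℝ) ^ 2 := by push_cast [hN_def]; ring
  set L : ℝ := enorm2 (B - A) with hL_def
  have hLsqrt : L = Real.sqrt ((N : ℝ)) := by
    rw [hL_def, enorm2, hBA, hNcast]
  have hLpos : 0 < L := by
    rw [hLsqrt]; exact Real.sqrt_pos.mpr hNR
  have hLne : L ≠ 0 := ne_of_gt hLpos
  have hLsq : L ^ 2 = (N : ℝ) := by
    rw [hLsqrt]; exact Real.sq_sqrt hNR.le
  -- the far side
  obtain ⟨z, ⟨⟨z1, hz1⟩, ⟨z2, hz2⟩⟩, s0, hz⟩ := hfar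
  set u1 : ℤ := z1 - a1 with hu1_def
  set u2 : ℤ := z2 - a2 with hu2_def
  have hrot : rot (B - A) = (-(q : ℝ), (p : ℝ)) := by rw [hBA]; rfl
  rw [hrot, hBA] at hz
  have hu1R : (u1 : ℝ) = (h / L) * (-(q : ℝ)) + s0 * (p : ℝ) := by
    have := congrArg Prod.fst hz
    simp only [Prod.fst_add, Prod.smul_fst, smul_eq_mul, hz1, hA1] at this
    push_cast [hu1_def]
    linarith [this]
  have hu2R : (u2 : ℝ) = (h / L) * (p : ℝ) + s0 * (q : ℝ) := by
    have := congrArg Prod.snd hz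
    simp only [Prod.snd_add, Prod.smul_snd, smul_eq_mul, hz2, hA2] at this
    push_cast [hu2_def]
    linarith [this]
  set D : ℤ := p * u2 - q * u1 with hD_def
  have hD : (D : ℝ) = h * L := by
    have h1 : (D : ℝ) = (h / L) * ((p : ℝ) ^ 2 + (q : ℝ) ^ 2) := by
      push_cast [hD_def]
      rw [hu1R, hu2R]; ring
    rw [h1, ← hNcast, ← hLsq]
    field_simp
  have hDne : D ≠ 0 := by
    intro hcon
    rw [hcon] at hD
    exact mul_ne_zero hh hLne (by exact_mod_cast hD.symm)
  have hDRne : (D : ℝ) ≠ 0 := Int.cast_ne_zero.mpr hDne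
  have hDN : (D : ℝ) / (N : ℝ) = h / L := by
    rw [hD, ← hLsq]
    field_simp
  -- gcd and Bezout
  set g : ℤ := (Int.gcd p q : ℤ) with hg_def
  have hgpos : 0 < g := by
    have h2 := Int.gcd_pos_iff.mpr hpq
    simp only [hg_def]
    exact_mod_cast h2
  have hgne : g ≠ 0 := ne_of_gt hgpos
  have hgR : (0 : ℝ) < (g : ℝ) := by exact_mod_cast hgpos
  have hgRne : (g : ℝ) ≠ 0 := ne_of_gt hgR
  obtain ⟨p', hp'⟩ : g ∣ p := Int.gcd_dvd_left p q
  obtain ⟨q', hq'⟩ : g ∣ q := Int.gcd_dvd_right p q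
  set a : ℤ := Int.gcdA p q with ha_def
  set b : ℤ := Int.gcdB p q with hb_def
  have hBez : p * a + q * b = g := (Int.gcd_eq_gcd_ab p q).symm
  have hBez' : p' * a + q' * b = 1 := by
    have h2 : g * (p' * a + q' * b) = g * 1 := by
      linear_combination hBez - a * hp' - b * hq'
    exact mul_left_cancel₀ hgne h2
  set e : ℤ := p' * u2 - q' * u1 with he_def
  have hge : g * e = D := by
    rw [he_def, hD_def]
    linear_combination (-u2) * hp' + u1 * hq'
  have hene : e ≠ 0 := fun hcon => hDne (by rw [← hge, hcon, mul_zero])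
  have heR : ((e : ℤ) : ℝ) ≠ 0 := Int.cast_ne_zero.mpr hene
  set W : ℤ := a * q - b * p with hW_def
  have hpR : (p : ℝ) = (g : ℝ) * (p' : ℝ) := by exact_mod_cast hp'
  have hqR : (q : ℝ) = (g : ℝ) * (q' : ℝ) := by exact_mod_cast hq'
  have hBezR : (p : ℝ) * (a : ℝ) + (q : ℝ) * (b : ℝ) = (g : ℝ) := by exact_mod_cast hBez
  have hBez'R : (p' : ℝ) * (a : ℝ) + (q' : ℝ) * (b : ℝ) = 1 := by exact_mod_cast hBez'
  have hgeR : (g : ℝ) * (e : ℝ) = (D : ℝ) := by exact_mod_cast hge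
  have hWR : (W : ℝ) = (a : ℝ) * (q : ℝ) - (b : ℝ) * (p : ℝ) := by push_cast [hW_def]; ring
  set cval : ℤ → ℝ := fun n' => -((g : ℝ) * (n' : ℝ) * (W : ℝ)) / (N : ℝ) with hcval
  -- normal form of points of the rectangle
  have hpoint : ∀ s t : ℝ, A + s • (B - A) + ((t * h) / L) • rot (B - A)
      = ((a1 : ℝ) + s * p - t * D * q / N, (a2 : ℝ) + s * q + t * D * p / N) := by
    intro s t
    have hth : (t * h) / L = t * ((D : ℝ) / N) := by
      rw [hDN, mul_div_assoc]
    rw [hrot, hBA, hA, hth]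
    simp only [Prod.mk_add_mk, Prod.smul_mk, smul_eq_mul, Prod.mk.injEq]
    constructor <;> ring
  have rect_mem : ∀ x : ℝ × ℝ, x ∈ rect A B h ↔ ∃ s t : ℝ, 0 ≤ s ∧ s < 1 ∧ 0 ≤ t ∧ t < 1 ∧
      x = ((a1 : ℝ) + s * p - t * D * q / N, (a2 : ℝ) + s * q + t * D * p / N) := by
    intro x
    constructor
    · rintro ⟨s, t, h1, h2, h3, h4, rfl⟩
      exact ⟨s, t, h1, h2, h3, h4, hpoint s t⟩
    · rintro ⟨s, t, h1, h2, h3, h4, rfl⟩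
      exact ⟨s, t, h1, h2, h3, h4, (hpoint s t).symm⟩
  -- solving for s and t
  have key : ∀ (m' n' : ℤ) (s t : ℝ),
      ((((a1 + (p' * m' - b * n') : ℤ) : ℝ), ((a2 + (q' * m' + a * n') : ℤ) : ℝ)) =
        ((a1 : ℝ) + s * p - t * D * q / N, (a2 : ℝ) + s * q + t * D * p / N)) →
      t * (e : ℝ) = (n' : ℝ) ∧ s * (g : ℝ) = (m' : ℝ) - cval n' := by
    intro m' n' s t hx
    rw [Prod.mk.injEq] at hx
    obtain ⟨E1, E2⟩ := hx
    push_cast at E1 E2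
    field_simp at E1 E2
    have cvalN : (N : ℝ) * cval n' = -((g : ℝ) * (n' : ℝ) * (W : ℝ)) := by
      simp only [hcval]
      field_simp
    constructor
    · have hteN : ((g : ℝ) * N) * (t * e) = ((g : ℝ) * N) * n' := by
        linear_combination (q : ℝ) * E1 - (p : ℝ) * E2 + t * (D : ℝ) * hNcast
          + t * (N : ℝ) * hgeR + (n' : ℝ) * N * hBezR + (m' : ℝ) * N * (q' : ℝ) * hpR
          - (m' : ℝ) * N * (p' : ℝ) * hqR
      exact mul_left_cancel₀ (mul_ne_zero hgRne hNne) hteN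
    · have hsgN2 : (s * (g : ℝ)) * ((N : ℝ) * N) = ((m' : ℝ) * N + (g : ℝ) * n' * W) * N := by
        linear_combination (-(g : ℝ) * p) * E1 + (-(g : ℝ) * q) * E2
          + ((g : ℝ) * s * N - (m' : ℝ) * N) * hNcast + (-(m' : ℝ) * N * p) * hpR
          + (-(m' : ℝ) * N * q) * hqR + (-(g : ℝ) * N * (n' : ℝ)) * hWR
      have hsgN : (s * (g : ℝ)) * (N : ℝ) = (m' : ℝ) * N + (g : ℝ) * n' * W := by
        apply mul_right_cancel₀ hNne
        linear_combination hsgN2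
      apply mul_right_cancel₀ hNne
      linear_combination hsgN + cvalN
  -- the point determined by integers m' n'
  have point_eq : ∀ m' n' : ℤ,
      ((((a1 + (p' * m' - b * n') : ℤ) : ℝ), ((a2 + (q' * m' + a * n') : ℤ) : ℝ)) : ℝ × ℝ) =
        ((a1 : ℝ) + (((m' : ℝ) - cval n') / g) * p - ((n' : ℝ) / e) * D * q / N,
         (a2 : ℝ) + (((m' : ℝ) - cval n') / g) * q + ((n' : ℝ) / e) * D * p / N) := by
    intro m' n'
    rw [Prod.mk.injEq]
    constructor
    · push_cast
      simp only [hcval]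
      field_simp
      linear_combination (-(e : ℝ) * m' * N) * hpR + (-(g : ℝ) * n' * q) * hgeR
        + (-(g : ℝ) * e * n' * b) * hNcast + (-(g : ℝ) * e * n' * p) * hWR
        + (-(g : ℝ) * e * n' * q) * hBezR
    · push_cast
      simp only [hcval]
      field_simp
      linear_combination (-(e : ℝ) * m' * N) * hqR + ((g : ℝ) * n' * p) * hgeR
        + ((g : ℝ) * e * n' * a) * hNcast + (-(g : ℝ) * e * n' * q) * hWR
        + ((g : ℝ) * e * n' * p) * hBezR
  -- membership criterion
  have mem_iff : ∀ m' n' : ℤ,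
      (((((a1 + (p' * m' - b * n') : ℤ) : ℝ), ((a2 + (q' * m' + a * n') : ℤ) : ℝ)) : ℝ × ℝ)
          ∈ rect A B h)
      ↔ (0 ≤ (n' : ℝ) / e ∧ (n' : ℝ) / e < 1 ∧ cval n' ≤ (m' : ℝ) ∧ (m' : ℝ) < cval n' + g) := by
    intro m' n'
    rw [rect_mem]
    constructor
    · rintro ⟨s, t, h1, h2, h3, h4, hx⟩
      obtain ⟨hte, hsg⟩ := key m' n' s t hx
      have ht' : t = (n' : ℝ) / e := by rw [eq_div_iff heR]; exact hte
      have hb1 := mul_nonneg h1 hgR.le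
      have hb2 := mul_lt_mul_of_pos_right h2 hgR
      refine ⟨by rw [← ht']; exact h3, by rw [← ht']; exact h4, by linarith, by linarith⟩
    · rintro ⟨h1, h2, h3, h4⟩
      refine ⟨((m' : ℝ) - cval n') / g, (n' : ℝ) / e, ?_, ?_, h1, h2, point_eq m' n'⟩
      · apply div_nonneg _ hgR.le; linarith
      · rw [div_lt_one hgR]; linarith
  -- the index set
  set J : Finset ℤ := if 0 < e then Finset.Ico 0 e else Finset.Ico (e + 1) 1 with hJ_def
  have hJmem : ∀ n' : ℤ, n' ∈ J ↔ (0 ≤ (n' : ℝ) / e ∧ (n' : ℝ) / e < 1) := by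
    intro n'
    have hne : ((n' : ℤ) : ℝ) / e * e = (n' : ℝ) := div_mul_cancel₀ _ heR
    rcases lt_or_gt_of_ne hene with hneg | hpos
    · have heRneg : ((e : ℤ) : ℝ) < 0 := by exact_mod_cast hneg
      rw [hJ_def, if_neg (by omega), Finset.mem_Ico]
      constructor
      · rintro ⟨hl, hr⟩
        have hl' : (e : ℝ) < (n' : ℝ) := by exact_mod_cast (by omega : e < n')
        have hr' : ((n' : ℤ) : ℝ) ≤ 0 := by exact_mod_cast (by omega : n' ≤ 0)
        constructor
        · rw [div_nonneg_iff]; right; exact ⟨hr', heRneg.le⟩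
        · rw [div_lt_one_iff]; right; right; exact ⟨heRneg, hl'⟩
      · rintro ⟨hl, hr⟩
        have h1 : ((n' : ℤ) : ℝ) ≤ 0 := by nlinarith [hne]
        have h2 : ((e : ℤ) : ℝ) < (n' : ℝ) := by nlinarith [hne]
        have h1' : n' ≤ 0 := by exact_mod_cast h1
        have h2' : e < n' := by exact_mod_cast h2
        omega
    · have heRpos : (0 : ℝ) < ((e : ℤ) : ℝ) := by exact_mod_cast hpos
      rw [hJ_def, if_pos hpos, Finset.mem_Ico]
      constructor
      · rintro ⟨hl, hr⟩
        have hl' : (0 : ℝ) ≤ (n' : ℝ) := by exact_mod_cast hl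
        have hr' : ((n' : ℤ) : ℝ) < e := by exact_mod_cast hr
        exact ⟨div_nonneg hl' heRpos.le, (div_lt_one heRpos).mpr hr'⟩
      · rintro ⟨hl, hr⟩
        have h1 : (0 : ℝ) ≤ ((n' : ℤ) : ℝ) := by nlinarith [hne]
        have h2 : ((n' : ℤ) : ℝ) < e := by nlinarith [hne, (div_lt_one heRpos).mp hr]
        have h1' : 0 ≤ n' := by exact_mod_cast h1
        have h2' : n' < e := by exact_mod_cast h2
        omega
  have hJcard : J.card = e.natAbs := by
    rw [hJ_def]
    rcases lt_or_gt_of_ne hene with hneg | hpos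
    · rw [if_neg (by omega), Int.card_Ico]; omega
    · rw [if_pos hpos, Int.card_Ico]; omega
  -- ceiling bounds
  have ceil_bounds : ∀ (m' : ℤ) (c : ℝ),
      (c ≤ (m' : ℝ) ∧ (m' : ℝ) < c + g) ↔ (⌈c⌉ ≤ m' ∧ m' < ⌈c⌉ + g) := by
    intro m' c
    constructor
    · rintro ⟨h1, h2⟩
      refine ⟨Int.ceil_le.mpr h1, ?_⟩
      have h3 : (m' : ℝ) < (⌈c⌉ : ℝ) + g := lt_of_lt_of_le h2 (by have := Int.le_ceil c; linarith)
      exact_mod_cast h3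
    · rintro ⟨h1, h2⟩
      have hc := Int.ceil_lt_add_one c
      refine ⟨le_trans (Int.le_ceil c) (by exact_mod_cast h1), ?_⟩
      have h2' : (m' : ℝ) ≤ (⌈c⌉ : ℝ) + (g : ℝ) - 1 := by
        exact_mod_cast (by omega : m' ≤ ⌈c⌉ + g - 1)
      linarith
  -- the parametrization
  set Φ : ℤ × ℤ → ℝ × ℝ := fun nm =>
    (((a1 + (p' * (nm.2 + ⌈cval nm.1⌉) - b * nm.1) : ℤ) : ℝ),
     ((a2 + (q' * (nm.2 + ⌈cval nm.1⌉) + a * nm.1) : ℤ) : ℝ)) with hΦ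
  set S : Finset (ℤ × ℤ) := J ×ˢ Finset.Ico (0 : ℤ) g with hS_def
  have hset : rect A B h ∩ latt = Φ '' ↑S := by
    ext x
    constructor
    · rintro ⟨hxr, ⟨x1i, hx1⟩, ⟨x2i, hx2⟩⟩
      have hxeq : x = ((x1i : ℝ), (x2i : ℝ)) := Prod.ext_iff.mpr ⟨hx1, hx2⟩
      set m : ℤ := x1i - a1 with hm_def
      set n : ℤ := x2i - a2 with hn_def
      set m' : ℤ := a * m + b * n with hm'_def
      set n' : ℤ := p' * n - q' * m with hn'_def
      have hm : p' * m' - b * n' = m := by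
        linear_combination p' * hm'_def - b * hn'_def + m * hBez'
      have hn : q' * m' + a * n' = n := by
        linear_combination q' * hm'_def + a * hn'_def + n * hBez'
      have hxeq2 : x = ((((a1 + (p' * m' - b * n') : ℤ) : ℝ), ((a2 + (q' * m' + a * n') : ℤ) : ℝ)) : ℝ × ℝ) := by
        rw [hxeq, hm, hn, hm_def, hn_def]
        norm_num
      rw [hxeq2] at hxr
      obtain ⟨c1, c2, c3, c4⟩ := (mem_iff m' n').mp hxr
      obtain ⟨d1, d2⟩ := (ceil_bounds m' (cval n')).mp ⟨c3, c4⟩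
      refine ⟨(n', m' - ⌈cval n'⌉), ?_, ?_⟩
      · simp only [hS_def, Finset.coe_product, Set.mem_prod, Finset.mem_coe, Finset.mem_Ico]
        exact ⟨(hJmem n').mpr ⟨c1, c2⟩, by omega, by omega⟩
      · rw [hΦ, hxeq2]
        simp only
        rw [show m' - ⌈cval n'⌉ + ⌈cval n'⌉ = m' by omega]
    · rintro ⟨⟨n', i⟩, hmem, rfl⟩
      simp only [hS_def, Finset.coe_product, Set.mem_prod, Finset.mem_coe, Finset.mem_Ico] at hmem
      obtain ⟨hJn, hi1, hi2⟩ := hmem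
      obtain ⟨c1, c2⟩ := (hJmem n').mp hJn
      constructor
      · rw [hΦ]
        simp only
        apply (mem_iff (i + ⌈cval n'⌉) n').mpr
        refine ⟨c1, c2, ?_, ?_⟩
        · have := (ceil_bounds (i + ⌈cval n'⌉) (cval n')).mpr ⟨by omega, by omega⟩
          exact this.1
        · have := (ceil_bounds (i + ⌈cval n'⌉) (cval n')).mpr ⟨by omega, by omega⟩
          exact this.2
      · exact ⟨⟨_, rfl⟩, ⟨_, rfl⟩⟩
  have hinj : Set.InjOn Φ ↑S := by
    rintro ⟨n1, i1⟩ _ ⟨n2, i2⟩ _ heq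
    have E1R := congrArg Prod.fst heq
    have E2R := congrArg Prod.snd heq
    simp only [hΦ] at E1R E2R
    have E1 : a1 + (p' * (i1 + ⌈cval n1⌉) - b * n1) = a1 + (p' * (i2 + ⌈cval n2⌉) - b * n2) := by
      exact_mod_cast E1R
    have E2 : a2 + (q' * (i1 + ⌈cval n1⌉) + a * n1) = a2 + (q' * (i2 + ⌈cval n2⌉) + a * n2) := by
      exact_mod_cast E2R
    have hn12 : n1 = n2 := by
      linear_combination p' * E2 - q' * E1 - (n1 - n2) * hBez'
    have hM : i1 + ⌈cval n1⌉ = i2 + ⌈cval n2⌉ := by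
      linear_combination a * E1 + b * E2 - (i1 + ⌈cval n1⌉ - (i2 + ⌈cval n2⌉)) * hBez'
    rw [hn12] at hM
    rw [Prod.mk.injEq]
    exact ⟨hn12, by omega⟩
  -- counting
  have hcount : (rect A B h ∩ latt).ncard = e.natAbs * g.toNat := by
    rw [hset, Set.ncard_image_of_injOn hinj, Set.ncard_coe_finset, hS_def,
      Finset.card_product, hJcard, Int.card_Ico]
    rw [sub_zero]
  -- volume
  have hvol : volume (rect A B h) = ENNReal.ofReal |(D : ℝ)| := by
    have hr : rect A B h = {x : ℝ × ℝ | ∃ s t : ℝ, 0 ≤ s ∧ s < 1 ∧ 0 ≤ t ∧ t < 1 ∧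
        x = A + s • (((p : ℤ) : ℝ), ((q : ℤ) : ℝ)) + t • (((D : ℝ) / N) • (-((q : ℤ) : ℝ), ((p : ℤ) : ℝ)))} := by
      have hsm : ∀ t : ℝ, ((t * h) / L) • (rot (B - A)) = t • (((D : ℝ) / N) • (-((q : ℤ) : ℝ), ((p : ℤ) : ℝ))) := by
        intro t
        rw [hrot, ← mul_smul]
        congr 1
        rw [hDN, mul_div_assoc]
      ext x
      constructor
      · rintro ⟨s, t, h1, h2, h3, h4, rfl⟩
        refine ⟨s, t, h1, h2, h3, h4, ?_⟩
        rw [show enorm2 (B - A) = L from rfl, ← hsm t, hBA]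
      · rintro ⟨s, t, h1, h2, h3, h4, rfl⟩
        refine ⟨s, t, h1, h2, h3, h4, ?_⟩
        rw [show enorm2 (B - A) = L from rfl, ← hsm t, hBA]
    rw [hr, vol_pgram]
    congr 1
    have hw : (((p : ℤ) : ℝ) * (((D : ℝ) / N) • (-((q : ℤ) : ℝ), ((p : ℤ) : ℝ))).2
        - (((D : ℝ) / N) • (-((q : ℤ) : ℝ), ((p : ℤ) : ℝ))).1 * ((q : ℤ) : ℝ)) = (D : ℝ) := by
      simp only [Prod.smul_mk, smul_eq_mul]
      field_simp
      linear_combination (-1 : ℝ) * hNcast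
    rw [hw]
  -- conclusion
  rw [hcount, hvol, ENNReal.toReal_ofReal (abs_nonneg _)]
  rw [← hgeR, abs_mul, abs_of_pos hgR]
  push_cast [Nat.cast_natAbs, Int.cast_abs]
  rw [show ((g.toNat : ℕ) : ℝ) = (g : ℝ) by exact_mod_cast Int.toNat_of_nonneg hgpos.le]
  ring
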